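/- Let k be a field, R a commutative ring that is an integral domain and a finitely generated k-algebra, I a proper ideal of R, and R̂ the I-adic completion of R with canonical map j : R → R̂. If P is a prime ideal of R with I ⊆ P, then the extension P·R̂ (the ideal of R̂ generated by j(P)) is a prime ideal of R̂. -/

import Mathlib

open AdicCompletion

section Aux

variable {R : Type*} [CommRing R] (I : Ideal R)

lemma adicCompletion_algebraMap_eq_of (r : R) :
    algebraMap R (AdicCompletion I R) r = of I R r := by
  ext n
  rfl

/-- Over a Noetherian ring, the range of the map on adic completions induced by the
inclusion of an ideal `P` is contained in the ideal generated by the image of `P`. -/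
lemma range_map_subtype_le [IsNoetherianRing R] (P : Ideal R)
    (y : AdicCompletion I (P : Submodule R R)) :
    AdicCompletion.map I (P : Submodule R R).subtype y ∈
      Ideal.map (algebraMap R (AdicCompletion I R)) P := by
  haveI : Module.Finite R (P : Submodule R R) :=
    Module.Finite.iff_fg.mpr (IsNoetherian.noetherian _)
  obtain ⟨t, rfl⟩ := ofTensorProduct_surjective_of_finite I (P : Submodule R R) y
  have h := LinearMap.congr_fun (ofTensorProduct_naturality I (P : Submodule R R).subtype) t
  simp only [LinearMap.coe_comp, Function.comp_apply] at h ⊢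
  rw [h]
  have claim : ∀ s : TensorProduct R (AdicCompletion I R) (P : Submodule R R),
      ofTensorProduct I R (TensorProduct.AlgebraTensorModule.map
        (LinearMap.id : AdicCompletion I R →ₗ[AdicCompletion I R] AdicCompletion I R)
        (P : Submodule R R).subtype s) ∈
        Ideal.map (algebraMap R (AdicCompletion I R)) P := by
    intro s
    induction s with
    | zero => simpa using Ideal.zero_mem _
    | tmul r p =>
        simp only [TensorProduct.AlgebraTensorModule.map_tmul, LinearMap.id_coe, id_eq,
          ofTensorProduct_tmul]
        have hp : of I R ((P : Submodule R R).subtype p) ∈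
            Ideal.map (algebraMap R (AdicCompletion I R)) P := by
          rw [← adicCompletion_algebraMap_eq_of]
          exact Ideal.mem_map_of_mem _ p.2
        exact Ideal.mul_mem_left _ r hp
    | add a b ha hb =>
        rw [map_add, map_add]
        exact Ideal.add_mem _ ha hb
  exact claim t

end Aux

/-- Let `k` be a field, `R` an integral domain which is a finitely generated `k`-algebra,
`I` a proper ideal of `R`, and `R̂` the `I`-adic completion of `R` with canonical map
`j : R → R̂`.  If `P` is a prime ideal of `R` containing `I`, then the extension `P·R̂`
is a prime ideal of `R̂`. -/
theorem map_prime_adicCompletion_isPrime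
    (k R : Type*) [Field k] [CommRing R] [IsDomain R] [Algebra k R]
    [Algebra.FiniteType k R] (I : Ideal R) (hI : I ≠ ⊤)
    (P : Ideal R) (hP : P.IsPrime) (hIP : I ≤ P) :
    (Ideal.map (algebraMap R (AdicCompletion I R)) P).IsPrime := by
  haveI : IsNoetherianRing R := Algebra.FiniteType.isNoetherianRing k R
  haveI := hP
  have hI1P : I ^ 1 ≤ P := by simpa using hIP
  -- the ring hom `R̂ → R ⧸ P`
  set φ : AdicCompletion I R →+* R ⧸ P :=
    (Ideal.Quotient.factor hI1P).comp (evalₐ I 1).toRingHom with hφ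
  suffices h : Ideal.map (algebraMap R (AdicCompletion I R)) P = RingHom.ker φ by
    rw [h]
    exact RingHom.ker_isPrime φ
  apply le_antisymm
  · rw [Ideal.map_le_iff_le_comap]
    intro p hp
    have : φ (algebraMap R (AdicCompletion I R) p) = 0 := by
      simp only [hφ, RingHom.comp_apply, AlgHom.toRingHom_eq_coe, RingHom.coe_coe]
      have : evalₐ I 1 (algebraMap R (AdicCompletion I R) p) = Ideal.Quotient.mk (I ^ 1) p := by
        rfl
      rw [this, Ideal.Quotient.factor_mk]
      exact (Ideal.Quotient.eq_zero_iff_mem).mpr hp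
    exact this
  · -- hard direction: ker φ ≤ P·R̂
    intro x hx
    induction x using AdicCompletion.induction_on I R with
    | h a =>
    rw [RingHom.mem_ker] at hx
    have ha1 : a 1 ∈ P := by
      simp only [hφ, RingHom.comp_apply, AlgHom.toRingHom_eq_coe, RingHom.coe_coe,
        evalₐ_mk, Ideal.Quotient.factor_mk] at hx
      exact (Ideal.Quotient.eq_zero_iff_mem).mp hx
    -- each `a n` for `n ≥ 1` lies in `P`
    have haP : ∀ n, 1 ≤ n → a n ∈ P := by
      intro n hn
      have := a.2 hn  -- a 1 ≡ a n mod I^1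
      rw [SModEq.sub_mem] at this
      have h1 : a 1 - a n ∈ P := hI1P (by simpa using this)
      have := P.sub_mem ha1 h1
      simpa using this
    -- `x` is killed by the completion of the quotient map `R → R ⧸ P`
    have hker : AdicCompletion.map I (P : Submodule R R).mkQ (AdicCompletion.mk I R a) = 0 := by
      rw [AdicCompletion.map_mk]
      ext n
      simp only [AdicCompletion.mk_apply_coe, AdicCauchySequence.map_apply_coe,
        Submodule.mkQ_apply, AdicCompletion.val_zero, Submodule.Quotient.mk_eq_zero]
      rcases Nat.eq_zero_or_pos n with hn | hn
      · subst hn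
        simp
      · have h0 : Submodule.Quotient.mk (p := (P : Submodule R R)) (a n) = (0 : R ⧸ P) :=
          (Submodule.Quotient.mk_eq_zero _).mpr (haP n hn)
        rw [h0]
        simp
    -- exactness gives a preimage in the completion of `P`
    have hexact : Function.Exact (AdicCompletion.map I (P : Submodule R R).subtype)
        (AdicCompletion.map I (P : Submodule R R).mkQ) :=
      AdicCompletion.map_exact (Submodule.injective_subtype _)
        (LinearMap.exact_subtype_mkQ _) (Submodule.mkQ_surjective _)
    obtain ⟨y, hy⟩ := (hexact _).mp hker
    rw [← hy]
    exact range_map_subtype_le I P y
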